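/- Suppose the conditional common trend assumption holds given covariates X, i.e. E[Y_1(0) − Y_0(0) | X, D=1] = E[Y_1(0) − Y_0(0) | X, D=0] (a common measurable function of X is a version of both conditional expectations), the no-anticipation assumption Y_0(1) = Y_0(0) holds almost surely, the common support condition P(D=1 | X) < 1 holds almost surely, and outcomes obey the observational rule Y_t = D·Y_t(1) + (1−D)·Y_t(0). Then the ATET is identified by the covariate-adjusted difference-in-differences: E[Y_1(1) − Y_1(0) | D=1] = E[Y_1 | D=1] − E[Y_0 | D=1] − E[ E[Y_1 | X, D=0] − E[Y_0 | X, D=0] | D=1 ]. -/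

import Mathlib

open MeasureTheory ProbabilityTheory

/-- Integrability transfers from `μ` to the conditional measure `μ[|s]`. -/
lemma integrable_cond_of_integrable {Ω : Type*} [MeasurableSpace Ω] {μ : Measure Ω}
    {s : Set Ω} (hs : μ s ≠ 0) {f : Ω → ℝ} (hf : Integrable f μ) :
    Integrable f (μ[|s]) := by
  rw [ProbabilityTheory.cond]
  exact (hf.restrict).smul_measure (ENNReal.inv_ne_top.mpr hs)

/-- Under the conditional common trend assumption given covariates `X`,
no anticipation, and common support, the ATET is identified by the
covariate-adjusted difference-in-differences. -/
theorem conditional_did_identifies_atet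
    {Ω 𝓧 : Type*} [MeasurableSpace Ω] [MeasurableSpace 𝓧]
    (μ : Measure Ω) [IsProbabilityMeasure μ]
    (D Y0d0 Y0d1 Y1d0 Y1d1 Y0 Y1 : Ω → ℝ) (X : Ω → 𝓧)
    (hDmeas : Measurable D) (hXmeas : Measurable X)
    (hDbin : ∀ ω, D ω = 0 ∨ D ω = 1)
    (hD1pos : 0 < μ {ω | D ω = 1})
    (hD1lt : μ {ω | D ω = 1} < 1)
    (hY0d0int : Integrable Y0d0 μ) (hY0d1int : Integrable Y0d1 μ)
    (hY1d0int : Integrable Y1d0 μ) (hY1d1int : Integrable Y1d1 μ)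
    -- observational rule
    (hY0 : ∀ ω, Y0 ω = D ω * Y0d1 ω + (1 - D ω) * Y0d0 ω)
    (hY1 : ∀ ω, Y1 ω = D ω * Y1d1 ω + (1 - D ω) * Y1d0 ω)
    -- no anticipation assumption
    (hNA : Y0d1 =ᵐ[μ] Y0d0)
    -- conditional common trends: a common measurable function of X is a version of
    -- E[Y₁(0) − Y₀(0) | X, D=1] and of E[Y₁(0) − Y₀(0) | X, D=0]
    (mct : 𝓧 → ℝ) (hmct : Measurable mct)
    (hCT1 : (fun ω => mct (X ω)) =ᵐ[μ[|{ω | D ω = 1}]]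
      MeasureTheory.condExp (MeasurableSpace.comap X inferInstance)
        (μ[|{ω | D ω = 1}]) (fun ω => Y1d0 ω - Y0d0 ω))
    (hCT0 : (fun ω => mct (X ω)) =ᵐ[μ[|{ω | D ω = 0}]]
      MeasureTheory.condExp (MeasurableSpace.comap X inferInstance)
        (μ[|{ω | D ω = 0}]) (fun ω => Y1d0 ω - Y0d0 ω))
    -- m1 and m0 are versions of E[Y₁ | X, D=0] and E[Y₀ | X, D=0]
    (m1 m0 : 𝓧 → ℝ) (hm1meas : Measurable m1) (hm0meas : Measurable m0)
    (hm1 : (fun ω => m1 (X ω)) =ᵐ[μ[|{ω | D ω = 0}]]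
      MeasureTheory.condExp (MeasurableSpace.comap X inferInstance)
        (μ[|{ω | D ω = 0}]) Y1)
    (hm0 : (fun ω => m0 (X ω)) =ᵐ[μ[|{ω | D ω = 0}]]
      MeasureTheory.condExp (MeasurableSpace.comap X inferInstance)
        (μ[|{ω | D ω = 0}]) Y0)
    (hm1int : Integrable (fun ω => m1 (X ω)) (μ[|{ω | D ω = 1}]))
    (hm0int : Integrable (fun ω => m0 (X ω)) (μ[|{ω | D ω = 1}]))
    -- common support: P(D=1 | X) < 1 almost surely
    (p : 𝓧 → ℝ) (hpmeas : Measurable p)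
    (hpVer : (fun ω => p (X ω)) =ᵐ[μ]
      MeasureTheory.condExp (MeasurableSpace.comap X inferInstance) μ D)
    (hCS : ∀ᵐ ω ∂μ, p (X ω) < 1) :
    -- the ATET is identified by covariate-adjusted DiD
    ∫ ω, (Y1d1 ω - Y1d0 ω) ∂(μ[|{ω | D ω = 1}]) =
      ∫ ω, Y1 ω ∂(μ[|{ω | D ω = 1}]) - ∫ ω, Y0 ω ∂(μ[|{ω | D ω = 1}]) -
      ∫ ω, (m1 (X ω) - m0 (X ω)) ∂(μ[|{ω | D ω = 1}]) := by
  classical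
  set A : Set Ω := {ω | D ω = 1} with hA_def
  set B : Set Ω := {ω | D ω = 0} with hB_def
  have hAmeas : MeasurableSet A := hDmeas (measurableSet_singleton 1)
  have hBmeas : MeasurableSet B := hDmeas (measurableSet_singleton 0)
  have hBA : B = Aᶜ := by
    ext ω
    simp only [hA_def, hB_def, Set.mem_setOf_eq, Set.mem_compl_iff]
    constructor
    · intro h h1; rw [h] at h1; norm_num at h1
    · intro h; rcases hDbin ω with h' | h'
      · exact h'
      · exact absurd h' h
  have hAne0 : μ A ≠ 0 := hD1pos.ne'
  have hAneT : μ A ≠ ⊤ := (measure_lt_top μ A).ne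
  have hBval : μ B = 1 - μ A := by
    rw [hBA, measure_compl hAmeas hAneT, measure_univ]
  have hBne0 : μ B ≠ 0 := by
    rw [hBval]
    exact (tsub_pos_of_lt hD1lt).ne'
  -- conditional measures are probability measures
  haveI hP1 : IsProbabilityMeasure (μ[|A]) := cond_isProbabilityMeasure hAne0
  haveI hP0 : IsProbabilityMeasure (μ[|B]) := cond_isProbabilityMeasure hBne0
  have hac1 : μ[|A] ≪ μ := cond_absolutelyContinuous
  have hac0 : μ[|B] ≪ μ := cond_absolutelyContinuous
  -- a.e. values of D under conditional measures
  have hD1ae : ∀ᵐ ω ∂(μ[|A]), D ω = 1 := by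
    have h0 : (μ[|A]) Aᶜ = 0 := by
      rw [cond_apply hAmeas]
      simp
    exact Filter.eventually_iff.mpr (mem_ae_iff.mpr h0)
  have hD0ae : ∀ᵐ ω ∂(μ[|B]), D ω = 0 := by
    have h0 : (μ[|B]) Bᶜ = 0 := by
      rw [cond_apply hBmeas]
      simp
    exact Filter.eventually_iff.mpr (mem_ae_iff.mpr h0)
  -- observed outcomes a.e. under conditional measures
  have hY1ae1 : Y1 =ᵐ[μ[|A]] Y1d1 := by
    filter_upwards [hD1ae] with ω h
    simp [hY1 ω, h]
  have hY0ae1 : Y0 =ᵐ[μ[|A]] Y0d0 := by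
    filter_upwards [hD1ae, hac1.ae_le hNA] with ω h hna
    simp [hY0 ω, h, hna]
  have hY1ae0 : Y1 =ᵐ[μ[|B]] Y1d0 := by
    filter_upwards [hD0ae] with ω h
    simp [hY1 ω, h]
  have hY0ae0 : Y0 =ᵐ[μ[|B]] Y0d0 := by
    filter_upwards [hD0ae] with ω h
    simp [hY0 ω, h]
  -- integrability of observed outcomes under μ
  have hDabs : ∀ ω, |D ω| ≤ 1 := by
    intro ω; rcases hDbin ω with h | h <;> simp [h]
  have h1Dabs : ∀ ω, |1 - D ω| ≤ 1 := by
    intro ω; rcases hDbin ω with h | h <;> simp [h]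
  have hmix : ∀ (Z Za Zb : Ω → ℝ), Integrable Za μ → Integrable Zb μ →
      (∀ ω, Z ω = D ω * Za ω + (1 - D ω) * Zb ω) → Integrable Z μ := by
    intro Z Za Zb hZa hZb hZ
    have h1 : Integrable (fun ω => D ω * Za ω) μ := by
      refine hZa.abs.mono' (hDmeas.aestronglyMeasurable.mul hZa.aestronglyMeasurable) ?_
      filter_upwards with ω
      rw [Real.norm_eq_abs, abs_mul]
      calc |D ω| * |Za ω| ≤ 1 * |Za ω| := by
            exact mul_le_mul_of_nonneg_right (hDabs ω) (abs_nonneg _)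
        _ = |Za ω| := one_mul _
    have h2 : Integrable (fun ω => (1 - D ω) * Zb ω) μ := by
      refine hZb.abs.mono' (((measurable_const.sub hDmeas)).aestronglyMeasurable.mul
        hZb.aestronglyMeasurable) ?_
      filter_upwards with ω
      rw [Real.norm_eq_abs, abs_mul]
      calc |1 - D ω| * |Zb ω| ≤ 1 * |Zb ω| := by
            exact mul_le_mul_of_nonneg_right (h1Dabs ω) (abs_nonneg _)
        _ = |Zb ω| := one_mul _
    have : Z = fun ω => D ω * Za ω + (1 - D ω) * Zb ω := funext hZ
    rw [this]
    exact h1.add h2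
  have hY1int : Integrable Y1 μ := hmix Y1 Y1d1 Y1d0 hY1d1int hY1d0int hY1
  have hY0int : Integrable Y0 μ := hmix Y0 Y0d1 Y0d0 hY0d1int hY0d0int hY0
  -- the sub-σ-algebra generated by X
  have hle : MeasurableSpace.comap X inferInstance ≤ _ := hXmeas.comap_le
  -- step 1: m1(X) - m0(X) =ᵐ[μ0] mct(X)
  have hY1int0 : Integrable Y1 (μ[|B]) := integrable_cond_of_integrable hBne0 hY1int
  have hY0int0 : Integrable Y0 (μ[|B]) := integrable_cond_of_integrable hBne0 hY0int
  have key0 : (fun ω => m1 (X ω) - m0 (X ω)) =ᵐ[μ[|B]] (fun ω => mct (X ω)) := by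
    have hsub : MeasureTheory.condExp (MeasurableSpace.comap X inferInstance) (μ[|B]) (fun ω => Y1 ω - Y0 ω) =ᵐ[μ[|B]]
        fun ω => MeasureTheory.condExp (MeasurableSpace.comap X inferInstance) (μ[|B]) Y1 ω -
          MeasureTheory.condExp (MeasurableSpace.comap X inferInstance) (μ[|B]) Y0 ω :=
      condExp_sub hY1int0 hY0int0 _
    have hcongr : MeasureTheory.condExp (MeasurableSpace.comap X inferInstance) (μ[|B]) (fun ω => Y1 ω - Y0 ω) =ᵐ[μ[|B]]
        MeasureTheory.condExp (MeasurableSpace.comap X inferInstance) (μ[|B]) (fun ω => Y1d0 ω - Y0d0 ω) := by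
      refine condExp_congr_ae ?_
      filter_upwards [hY1ae0, hY0ae0] with ω h1 h0
      rw [h1, h0]
    calc (fun ω => m1 (X ω) - m0 (X ω))
        =ᵐ[μ[|B]] fun ω => MeasureTheory.condExp (MeasurableSpace.comap X inferInstance) (μ[|B]) Y1 ω -
          MeasureTheory.condExp (MeasurableSpace.comap X inferInstance) (μ[|B]) Y0 ω := hm1.sub hm0
      _ =ᵐ[μ[|B]] MeasureTheory.condExp (MeasurableSpace.comap X inferInstance) (μ[|B]) (fun ω => Y1 ω - Y0 ω) := hsub.symm
      _ =ᵐ[μ[|B]] MeasureTheory.condExp (MeasurableSpace.comap X inferInstance) (μ[|B]) (fun ω => Y1d0 ω - Y0d0 ω) := hcongr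
      _ =ᵐ[μ[|B]] fun ω => mct (X ω) := hCT0.symm
  -- step 2: transfer to μ1 via common support
  set N : Set 𝓧 := {x | ¬ (m1 x - m0 x = mct x)} with hN_def
  have hNmeas : MeasurableSet N := (measurableSet_eq_fun (hm1meas.sub hm0meas) hmct).compl
  set S : Set Ω := X ⁻¹' N with hS_def
  have hSmeas : MeasurableSet S := hXmeas hNmeas
  have hSB : μ (B ∩ S) = 0 := by
    have h0 : (μ[|B]) S = 0 := by
      have := key0
      rw [Filter.eventuallyEq_iff_exists_mem] at this
      rcases this with ⟨s, hs, hss⟩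
      rw [mem_ae_iff] at hs
      refine measure_mono_null ?_ hs
      intro ω hω hmem
      exact hω (hss hmem)
    rw [cond_apply hBmeas] at h0
    rcases mul_eq_zero.mp h0 with h | h
    · exact absurd (ENNReal.inv_eq_zero.mp h) (measure_lt_top μ B).ne
    · exact h
  -- μ S = μ (S ∩ A)
  have hSA_eq : μ (S ∩ A) = μ S := by
    have hdiff : μ (S \ A) = 0 := by
      refine measure_mono_null ?_ hSB
      intro ω hω
      exact ⟨by rw [hBA]; exact hω.2, hω.1⟩
    have := measure_inter_add_diff S hAmeas (μ := μ)
    rw [hdiff, add_zero] at this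
    exact this
  -- D as indicator
  have hDind : D = A.indicator (fun _ => (1 : ℝ)) := by
    funext ω
    rcases hDbin ω with h | h
    · rw [h, Set.indicator_of_notMem]
      simp [hA_def, h]
    · rw [h, Set.indicator_of_mem]
      exact h
  have hDint : Integrable D μ := by
    rw [hDind]
    exact (integrable_const (1 : ℝ)).indicator hAmeas
  -- the common support argument: μ S = 0
  have hS0 : μ S = 0 := by
    have hSm : MeasurableSet[MeasurableSpace.comap X inferInstance] S := ⟨N, hNmeas, rfl⟩
    have hpXint : Integrable (fun ω => p (X ω)) μ :=
      (integrable_condExp).congr hpVer.symm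
    have hint_pX : ∫ ω in S, p (X ω) ∂μ = (μ (S ∩ A)).toReal := by
      have h1 : ∫ ω in S, p (X ω) ∂μ =
          ∫ ω in S, MeasureTheory.condExp (MeasurableSpace.comap X inferInstance) μ D ω ∂μ :=
        integral_congr_ae (ae_restrict_of_ae hpVer)
      have h2 : ∫ ω in S, MeasureTheory.condExp (MeasurableSpace.comap X inferInstance) μ D ω ∂μ = ∫ ω in S, D ω ∂μ :=
        setIntegral_condExp hle hDint hSm
      have h3 : ∫ ω in S, D ω ∂μ = (μ (S ∩ A)).toReal := by
        rw [hDind, setIntegral_indicator hAmeas]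
        simp
        rfl
      rw [h1, h2, h3]
    -- integral of 1 - p(X) over S is zero
    have hfint : Integrable (fun ω => 1 - p (X ω)) μ :=
      (integrable_const (1 : ℝ)).sub hpXint
    have hS_int_zero : ∫ ω in S, (1 - p (X ω)) ∂μ = 0 := by
      rw [integral_sub (integrable_const _).restrict hpXint.restrict]
      rw [setIntegral_const, hint_pX, hSA_eq]
      simp
      exact sub_self _
    have hnonneg : 0 ≤ᵐ[μ.restrict S] fun ω => 1 - p (X ω) := by
      refine ae_restrict_of_ae ?_
      filter_upwards [hCS] with ω h
      simp only [Pi.zero_apply]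
      linarith
    have hzero : (fun ω => 1 - p (X ω)) =ᵐ[μ.restrict S] 0 :=
      (setIntegral_eq_zero_iff_of_nonneg_ae hnonneg hfint.restrict).mp hS_int_zero
    have hFalse : ∀ᵐ ω ∂(μ.restrict S), False := by
      filter_upwards [hzero, ae_restrict_of_ae hCS] with ω h1 h2
      simp only [Pi.zero_apply] at h1
      linarith
    have := ae_iff.mp hFalse
    simp only [not_false_iff, Set.setOf_true] at this
    rwa [Measure.restrict_apply_univ] at this
  -- hence m1(X) - m0(X) =ᵐ[μ1] mct(X)
  have key1 : (fun ω => m1 (X ω) - m0 (X ω)) =ᵐ[μ[|A]] (fun ω => mct (X ω)) := by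
    have : (μ[|A]) S = 0 := hac1 hS0
    have hmem : Sᶜ ∈ ae (μ[|A]) := mem_ae_iff.mpr (by rwa [compl_compl])
    filter_upwards [hmem] with ω h
    exact not_not.mp h
  -- step 3: ∫ mct(X) dμ1 = ∫ (Y1d0 - Y0d0) dμ1
  have hsubint1 : Integrable (fun ω => Y1d0 ω - Y0d0 ω) (μ[|A]) :=
    integrable_cond_of_integrable hAne0 (hY1d0int.sub hY0d0int)
  have hmct_int : ∫ ω, mct (X ω) ∂(μ[|A]) = ∫ ω, (Y1d0 ω - Y0d0 ω) ∂(μ[|A]) := by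
    rw [integral_congr_ae hCT1]
    exact integral_condExp hle
  -- assemble
  have hY1d1int1 : Integrable Y1d1 (μ[|A]) := integrable_cond_of_integrable hAne0 hY1d1int
  have hY1d0int1 : Integrable Y1d0 (μ[|A]) := integrable_cond_of_integrable hAne0 hY1d0int
  have hY0d0int1 : Integrable Y0d0 (μ[|A]) := integrable_cond_of_integrable hAne0 hY0d0int
  have e1 : ∫ ω, Y1 ω ∂(μ[|A]) = ∫ ω, Y1d1 ω ∂(μ[|A]) := integral_congr_ae hY1ae1
  have e0 : ∫ ω, Y0 ω ∂(μ[|A]) = ∫ ω, Y0d0 ω ∂(μ[|A]) := integral_congr_ae hY0ae1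
  have em : ∫ ω, (m1 (X ω) - m0 (X ω)) ∂(μ[|A]) =
      ∫ ω, Y1d0 ω ∂(μ[|A]) - ∫ ω, Y0d0 ω ∂(μ[|A]) := by
    rw [integral_congr_ae key1, hmct_int, integral_sub hY1d0int1 hY0d0int1]
  rw [e1, e0, em, integral_sub hY1d1int1 hY1d0int1]
  ring
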